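/- With the same setup (λ, λ̂ differing by a box move from row i to row î > i; μ, μ̂ differing by the same move; λ∖μ = λ̂∖μ̂ = (r,c)), if r > î then for any N ≥ ℓ(λ̂): s_λ(1^N)·s_{μ̂}(1^N) ≤ s_{λ̂}(1^N)·s_μ(1^N). -/

import Mathlib

open scoped BigOperators

def isPartition (f : ℕ → ℕ) : Prop :=
  (∀ ⦃a b : ℕ⦄, a ≤ b → f b ≤ f a) ∧ ∃ N, ∀ a, N ≤ a → f a = 0

noncomputable def psize (f : ℕ → ℕ) : ℕ := ∑ᶠ a, f a

def addBox (mu lam : ℕ → ℕ) : Prop := ∃ r, lam = Function.update mu r (mu r + 1)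

noncomputable def dimY (lam : ℕ → ℕ) : ℕ :=
  Set.ncard { p : ℕ → ℕ → ℕ |
    p 0 = (fun _ => 0) ∧ (∀ k, isPartition (p k)) ∧
    (∀ k, k < psize lam → addBox (p k) (p (k + 1))) ∧
    (∀ k, psize lam ≤ k → p k = lam) }

def dominates (lam mu : ℕ → ℕ) : Prop :=
  ∀ k, ∑ a ∈ Finset.range k, mu a ≤ ∑ a ∈ Finset.range k, lam a

def moveBox (lam hatlam : ℕ → ℕ) (i hi : ℕ) : Prop :=
  lam i = hatlam i + 1 ∧ hatlam hi = lam hi + 1 ∧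
  ∀ a, a ≠ i → a ≠ hi → lam a = hatlam a

noncomputable def schurOnes (N : ℕ) (lam : ℕ → ℕ) : ℕ :=
  Set.ncard { T : ℕ → ℕ → ℕ |
    (∀ i j, j < lam i → 1 ≤ T i j ∧ T i j ≤ N) ∧
    (∀ i j, j + 1 < lam i → T i j ≤ T i (j + 1)) ∧
    (∀ i j, j < lam (i + 1) → T i j < T (i + 1) j) ∧
    (∀ i j, lam i ≤ j → T i j = 0) }

noncomputable def projStep (rho : (ℕ → ℕ) → ℝ) : (ℕ → ℕ) → ℝ :=
  fun mu => ∑ᶠ l ∈ { l : ℕ → ℕ | addBox mu l }, ((dimY mu : ℝ) / (dimY l : ℝ)) * rho l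

def isMeasureOn (m : ℕ) (rho : (ℕ → ℕ) → ℝ) : Prop :=
  (∀ f, 0 ≤ rho f) ∧ ∀ f, rho f ≠ 0 → isPartition f ∧ psize f = m

def stochDom (m : ℕ) (rho rho' : (ℕ → ℕ) → ℝ) : Prop :=
  ∀ U : Set (ℕ → ℕ),
    (∀ a ∈ U, ∀ b, isPartition b → psize b = m → dominates b a → b ∈ U) →
    ∑ᶠ f ∈ U, rho' f ≤ ∑ᶠ f ∈ U, rho f

namespace SchurAux






def SSYTset (N : ℕ) (lam : ℕ → ℕ) : Set (ℕ → ℕ → ℕ) :=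
  { T : ℕ → ℕ → ℕ |
    (∀ i j, j < lam i → 1 ≤ T i j ∧ T i j ≤ N) ∧
    (∀ i j, j + 1 < lam i → T i j ≤ T i (j + 1)) ∧
    (∀ i j, j < lam (i + 1) → T i j < T (i + 1) j) ∧
    (∀ i j, lam i ≤ j → T i j = 0) }

/-- multi-step row monotonicity -/
lemma row_mono {N : ℕ} {f : ℕ → ℕ} {T : ℕ → ℕ → ℕ} (hT : T ∈ SSYTset N f)
    {i j k : ℕ} (hjk : j ≤ k) (hk : k < f i) : T i j ≤ T i k := by
  induction k with
  | zero => have : j = 0 := by omega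
            subst this; exact le_rfl
  | succ k ih =>
      rcases Nat.eq_or_lt_of_le hjk with h | h
      · subst h; exact le_rfl
      · exact le_trans (ih (by omega) (by omega)) (hT.2.1 i k (by omega))

/-- entries in column 0 grow at least like the row index -/
lemma col_ge {N : ℕ} {f : ℕ → ℕ} {T : ℕ → ℕ → ℕ} (hT : T ∈ SSYTset N f)
    (a : ℕ) (ha : 1 ≤ f a) (hdec : ∀ ⦃x y : ℕ⦄, x ≤ y → f y ≤ f x) :
    a + 1 ≤ T a 0 := by
  induction a with
  | zero => exact (hT.1 0 0 (by omega)).1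
  | succ a ih =>
      have h1 : 1 ≤ f a := le_trans ha (hdec (Nat.le_succ a))
      have := hT.2.2.1 a 0 (by omega)
      have := ih h1
      omega

lemma finite_SSYT {N K : ℕ} {f : ℕ → ℕ} (hK : ∀ a, K ≤ a → f a = 0)
    {B : ℕ} (hB : ∀ a, f a ≤ B) : (SSYTset N f).Finite := by
  have hbd : ∀ T ∈ SSYTset N f, ∀ i j, T i j ≤ N := by
    intro T hT i j
    by_cases h : j < f i
    · exact (hT.1 i j h).2
    · rw [hT.2.2.2 i j (by omega)]; omega
  apply Set.Finite.of_finite_image (f := fun (T : ℕ → ℕ → ℕ) =>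
    (fun (p : Fin K × Fin B) => (⟨min (T p.1 p.2) N, by omega⟩ : Fin (N+1))))
  · exact Set.toFinite _
  · intro T hT S hS h
    funext i j
    have hTb := hbd T hT; have hSb := hbd S hS
    by_cases hiK : i < K
    · by_cases hjB : j < B
      · have := congrFun h (⟨i, hiK⟩, ⟨j, hjB⟩)
        simp only [Fin.mk.injEq] at this
        have h1 : min (T i j) N = T i j := by have := hTb i j; omega
        have h2 : min (S i j) N = S i j := by have := hSb i j; omega
        omega
      · have hfB : f i ≤ j := le_trans (hB i) (by omega)
        rw [hT.2.2.2 i j hfB, hS.2.2.2 i j hfB]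
    · have hfi : f i = 0 := hK i (by omega)
      rw [hT.2.2.2 i j (by omega), hS.2.2.2 i j (by omega)]

/-- too many rows: no tableau -/
lemma SSYT_empty {N : ℕ} {f : ℕ → ℕ} (hdec : ∀ ⦃x y : ℕ⦄, x ≤ y → f y ≤ f x)
    (hN : 1 ≤ f N) : SSYTset N f = ∅ := by
  ext T
  simp only [Set.mem_empty_iff_false, iff_false]
  intro hT
  have h1 := col_ge hT N hN hdec
  have h2 := (hT.1 N 0 (by omega)).2
  omega

lemma SSYT_zero (N : ℕ) {f : ℕ → ℕ} (hf : ∀ a, f a = 0) :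
    SSYTset N f = {fun _ _ => 0} := by
  ext T
  constructor
  · intro hT
    funext i j
    exact hT.2.2.2 i j (by rw [hf]; omega)
  · intro hT
    rw [Set.mem_singleton_iff] at hT
    subst hT
    refine ⟨?_, ?_, ?_, ?_⟩ <;> intro i j h <;> simp [hf] at h ⊢







def ext {n : ℕ} (p : Fin n → ℕ) : ℕ → ℕ := fun a => if h : a < n then p ⟨a, h⟩ else 0

section Branch

variable {N : ℕ} {f : ℕ → ℕ}

/-- number of entries `≤ N` in row `a` -/
def phi (N : ℕ) (f : ℕ → ℕ) (T : ℕ → ℕ → ℕ) : Fin (N + 1) → ℕ :=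
  fun a => ((Finset.range (f a)).filter (fun j => T a j ≤ N)).card

lemma prefix_iff {T : ℕ → ℕ → ℕ} (hT : T ∈ SSYTset (N + 1) f) (a : Fin (N + 1)) (j : ℕ) :
    j < phi N f T a ↔ j < f a ∧ T a j ≤ N := by
  simp only [phi]
  constructor
  · intro hj
    have h1 : j < f ↑a := by
      have := Finset.card_le_card (Finset.filter_subset (fun j => T ↑a j ≤ N) (Finset.range (f ↑a)))
      simp only [Finset.card_range] at this
      omega
    refine ⟨h1, ?_⟩
    by_contra hc
    have hsub : (Finset.range (f ↑a)).filter (fun j' => T ↑a j' ≤ N) ⊆ Finset.range j := by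
      intro j' hj'
      simp only [Finset.mem_filter, Finset.mem_range] at hj' ⊢
      by_contra hge
      have : T ↑a j ≤ T ↑a j' := row_mono hT (by omega) hj'.1
      omega
    have := Finset.card_le_card hsub
    simp only [Finset.card_range] at this
    omega
  · rintro ⟨h1, h2⟩
    have hsub : Finset.range (j + 1) ⊆ (Finset.range (f ↑a)).filter (fun j' => T ↑a j' ≤ N) := by
      intro j' hj'
      simp only [Finset.mem_range] at hj'
      simp only [Finset.mem_filter, Finset.mem_range]
      refine ⟨by omega, ?_⟩
      have := row_mono hT (show j' ≤ j by omega) h1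
      omega
    have := Finset.card_le_card hsub
    simp only [Finset.card_range] at this
    omega

lemma phi_mem (hdec : ∀ ⦃x y : ℕ⦄, x ≤ y → f y ≤ f x)
    {T : ℕ → ℕ → ℕ} (hT : T ∈ SSYTset (N + 1) f) :
    phi N f T ∈ Fintype.piFinset (fun a : Fin (N + 1) => Finset.Icc (f ((a : ℕ) + 1)) (f (a : ℕ))) := by
  rw [Fintype.mem_piFinset]
  intro a
  rw [Finset.mem_Icc]
  constructor
  · -- f (a+1) ≤ phi T a
    rcases Nat.eq_zero_or_pos (f ((a : ℕ) + 1)) with h | h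
    · omega
    · have : f ((a : ℕ) + 1) - 1 < phi N f T a := by
        rw [prefix_iff hT]
        have hcol := hT.2.2.1 ↑a (f (↑a + 1) - 1) (by omega)
        have hbd := (hT.1 (↑a + 1) (f (↑a + 1) - 1) (by omega)).2
        have hd : f ((a : ℕ) + 1) ≤ f (a : ℕ) := hdec (Nat.le_succ _)
        exact ⟨by omega, by omega⟩
      omega
  · have := Finset.card_le_card (Finset.filter_subset (fun j => T ↑a j ≤ N) (Finset.range (f ↑a)))
    simp only [Finset.card_range] at this
    exact this

def dn (q : ℕ → ℕ) (T : ℕ → ℕ → ℕ) : ℕ → ℕ → ℕ := fun a j => if j < q a then T a j else 0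

def up (f q : ℕ → ℕ) (N : ℕ) (S : ℕ → ℕ → ℕ) : ℕ → ℕ → ℕ :=
  fun a j => if j < q a then S a j else if j < f a then N + 1 else 0

lemma fiber_bij (hdec : ∀ ⦃x y : ℕ⦄, x ≤ y → f y ≤ f x)
    (hvan : ∀ a, N + 1 ≤ a → f a = 0)
    (p : Fin (N + 1) → ℕ)
    (hp : p ∈ Fintype.piFinset (fun a : Fin (N + 1) => Finset.Icc (f ((a : ℕ) + 1)) (f (a : ℕ)))) :
    Set.BijOn (dn (ext p)) {T | T ∈ SSYTset (N + 1) f ∧ phi N f T = p} (SSYTset N (ext p)) := by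
  rw [Fintype.mem_piFinset] at hp
  simp only [Finset.mem_Icc] at hp
  set q := ext p with hq
  -- basic facts about q
  have hql : ∀ a, f (a + 1) ≤ q a := by
    intro a
    by_cases h : a < N + 1
    · have h2 := (hp ⟨a, h⟩).1
      simp only [hq, ext, dif_pos h]
      simpa using h2
    · have : f (a + 1) = 0 := hvan _ (by omega)
      omega
  have hqu : ∀ a, q a ≤ f a := by
    intro a
    by_cases h : a < N + 1
    · have h2 := (hp ⟨a, h⟩).2
      simp only [hq, ext, dif_pos h]
      simpa using h2
    · simp [hq, ext, h]
  have hphi : ∀ T ∈ SSYTset (N + 1) f, ∀ a, phi N f T = p → ∀ j, (j < q a ↔ j < f a ∧ T a j ≤ N) := by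
    intro T hT a hphiT j
    by_cases h : a < N + 1
    · have := prefix_iff hT ⟨a, h⟩ j
      rw [hphiT] at this
      simpa [hq, ext, h] using this
    · have hf0 : f a = 0 := hvan _ (by omega)
      have : q a = 0 := by simp [hq, ext, h]
      simp [this, hf0]
  constructor
  · -- MapsTo
    rintro T ⟨hT, hphiT⟩
    have hiff := fun a => hphi T hT a hphiT
    refine ⟨?_, ?_, ?_, ?_⟩
    · intro a j hj
      have := (hiff a j).1 hj
      simp only [dn, if_pos hj]
      exact ⟨(hT.1 a j this.1).1, this.2⟩
    · intro a j hj
      have h1 : j < q a := by omega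
      simp only [dn, if_pos hj, if_pos h1]
      exact hT.2.1 a j (by have := (hiff a (j+1)).1 hj; omega)
    · intro a j hj
      have h2 : j < f (a + 1) := by have := hqu (a+1); omega
      have h1 : j < q a := by have := hql a; omega
      simp only [dn, if_pos hj, if_pos h1]
      exact hT.2.2.1 a j h2
    · intro a j hj
      simp [dn, Nat.not_lt.mpr hj]
  constructor
  · -- InjOn
    rintro T ⟨hT, hphiT⟩ T' ⟨hT', hphiT'⟩ heq
    have hiff := fun a => hphi T hT a hphiT
    have hiff' := fun a => hphi T' hT' a hphiT'
    funext a j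
    by_cases h1 : j < q a
    · have := congrFun (congrFun heq a) j
      simpa [dn, if_pos h1] using this
    · by_cases h2 : j < f a
      · -- both entries are N+1
        have e1 : T a j = N + 1 := by
          have hb := (hT.1 a j h2).2
          have := (hiff a j).2
          omega
        have e2 : T' a j = N + 1 := by
          have hb := (hT'.1 a j h2).2
          have := (hiff' a j).2
          omega
        omega
      · rw [hT.2.2.2 a j (by omega), hT'.2.2.2 a j (by omega)]
  · -- SurjOn
    intro S hS
    refine ⟨up f q N S, ⟨⟨?_, ?_, ?_, ?_⟩, ?_⟩, ?_⟩
    · intro a j hj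
      by_cases h : j < q a
      · have := hS.1 a j h
        simp only [up, if_pos h]
        omega
      · simp only [up, if_neg h, if_pos hj]
        omega
    · intro a j hj
      by_cases h1 : j + 1 < q a
      · simp only [up, if_pos h1, if_pos (show j < q a by omega)]
        exact hS.2.1 a j h1
      · by_cases h2 : j < q a
        · have := (hS.1 a j h2).2
          simp only [up, if_pos h2, if_neg h1, if_pos hj]
          omega
        · simp only [up, if_neg h1, if_neg h2, if_pos (show j < f a by omega),
            if_pos (show j + 1 < f a by omega)]
          exact le_rfl
    · intro a j hj
      have hja : j < q a := by have := hql a; omega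
      by_cases h1 : j < q (a + 1)
      · simp only [up, if_pos h1, if_pos hja]
        exact hS.2.2.1 a j h1
      · have := (hS.1 a j hja).2
        simp only [up, if_neg h1, if_pos hj, if_pos hja]
        omega
    · intro a j hj
      have h1 : ¬ j < q a := by have := hqu a; omega
      simp [up, h1, Nat.not_lt.mpr hj]
    · -- phi (up ...) = p
      funext a
      have hfilter : (Finset.range (f ↑a)).filter (fun j => up f q N S ↑a j ≤ N)
          = Finset.range (q ↑a) := by
        ext j
        simp only [Finset.mem_filter, Finset.mem_range]
        constructor
        · rintro ⟨h1, h2⟩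
          by_contra h3
          simp only [up, if_neg h3, if_pos h1] at h2
          omega
        · intro h
          have hfa : j < f ↑a := by have := hqu ↑a; omega
          refine ⟨hfa, ?_⟩
          simp only [up, if_pos h]
          exact (hS.1 ↑a j h).2
      simp only [phi, hfilter, Finset.card_range]
      simp [hq, ext, a.isLt]
    · -- dn q (up ...) = S
      funext a j
      by_cases h : j < q a
      · simp [dn, up, h]
      · rw [hS.2.2.2 a j (by omega)]
        simp [dn, h]

lemma branch (N : ℕ) (f : ℕ → ℕ) (hdec : ∀ ⦃x y : ℕ⦄, x ≤ y → f y ≤ f x)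
    (hvan : ∀ a, N + 1 ≤ a → f a = 0) :
    (SSYTset (N + 1) f).ncard
      = ∑ p ∈ Fintype.piFinset (fun a : Fin (N + 1) => Finset.Icc (f ((a : ℕ) + 1)) (f (a : ℕ))),
        (SSYTset N (ext p)).ncard := by
  have hfin : (SSYTset (N + 1) f).Finite := finite_SSYT hvan (B := f 0) (fun a => hdec (Nat.zero_le a))
  classical
  set F := hfin.toFinset with hF
  have hmem : ∀ T ∈ F, phi N f T ∈ Fintype.piFinset
      (fun a : Fin (N + 1) => Finset.Icc (f ((a : ℕ) + 1)) (f (a : ℕ))) := by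
    intro T hT
    rw [hF, Set.Finite.mem_toFinset] at hT
    exact phi_mem hdec hT
  have hcard := Finset.card_eq_sum_card_fiberwise hmem
  have h1 : (SSYTset (N + 1) f).ncard = F.card := by
    rw [hF]; exact Set.ncard_eq_toFinset_card _ hfin
  rw [h1, hcard]
  apply Finset.sum_congr rfl
  intro p hp
  have hbij := fiber_bij hdec hvan p hp
  have hseteq : {T | T ∈ SSYTset (N + 1) f ∧ phi N f T = p} = ↑(F.filter (fun T => phi N f T = p)) := by
    ext T
    simp [hF, Set.Finite.mem_toFinset]
  rw [hseteq] at hbij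
  calc (F.filter (fun T => phi N f T = p)).card
      = (↑(F.filter (fun T => phi N f T = p)) : Set (ℕ → ℕ → ℕ)).ncard := by
        rw [Set.ncard_coe_finset]
    _ = (SSYTset N (ext p)).ncard := by
        rw [← hbij.image_eq]
        exact (Set.ncard_image_of_injOn hbij.injOn).symm

end Branch






/-- hockey stick, range version -/
lemma sum_range_choose_eq (u b : ℕ) :
    ∑ t ∈ Finset.range u, Nat.choose t b = Nat.choose u (b + 1) := by
  induction u with
  | zero => simp
  | succ u ih => rw [Finset.sum_range_succ, ih, Nat.choose_succ_succ']; omega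

lemma sum_Ico_choose_q (l u b : ℕ) (h : l ≤ u) :
    ∑ t ∈ Finset.Ico l u, (Nat.choose t b : ℚ)
      = (Nat.choose u (b + 1) : ℚ) - (Nat.choose l (b + 1) : ℚ) := by
  rw [Finset.sum_Ico_eq_sub _ h]
  push_cast [← sum_range_choose_eq u b, ← sum_range_choose_eq l b]
  ring

/-- multilinearity: sum of determinants over independent row choices -/
lemma det_sum_pi {n : ℕ} (t : Fin n → Finset ℕ) (g : Fin n → ℕ → Fin n → ℚ) :
    ∑ p ∈ Fintype.piFinset t, Matrix.det (Matrix.of fun a b => g a (p a) b)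
      = Matrix.det (Matrix.of fun a b => ∑ y ∈ t a, g a y b) := by
  have hdet : ∀ M : Matrix (Fin n) (Fin n) ℚ,
      M.det = ∑ σ : Equiv.Perm (Fin n), Equiv.Perm.sign σ • ∏ i, M i (σ i) := by
    intro M
    rw [← Matrix.det_transpose M, Matrix.det_apply]
    simp only [Matrix.transpose_apply]
  simp only [hdet, Matrix.of_apply]
  rw [Finset.sum_comm]
  refine Finset.sum_congr rfl (fun σ _ => ?_)
  rw [← Finset.smul_sum]
  congr 1
  exact (Finset.prod_univ_sum t (fun i y => g i y (σ i))).symm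

/-- evaluation of the binomial determinant as a Vandermonde product -/
lemma det_choose_eval {n : ℕ} (c : Fin n → ℕ) :
    Matrix.det (Matrix.of fun a b : Fin n => (Nat.choose (c a) (b : ℕ) : ℚ))
        * (∏ b : Fin n, (Nat.factorial (b : ℕ) : ℚ))
      = ∏ a : Fin n, ∏ b ∈ Finset.Ioi a, ((c b : ℚ) - (c a : ℚ)) := by
  have h1 : Matrix.det (Matrix.of fun a b : Fin n =>
      (Nat.factorial (b : ℕ) : ℚ) * (Nat.choose (c a) (b : ℕ) : ℚ))
      = (∏ b : Fin n, (Nat.factorial (b : ℕ) : ℚ))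
        * Matrix.det (Matrix.of fun a b : Fin n => (Nat.choose (c a) (b : ℕ) : ℚ)) := by
    exact Matrix.det_mul_row (fun b : Fin n => (Nat.factorial (b : ℕ) : ℚ))
      (Matrix.of fun a b : Fin n => (Nat.choose (c a) (b : ℕ) : ℚ))
  have h2 : ∀ (a b : Fin n), (Nat.factorial (b : ℕ) : ℚ) * (Nat.choose (c a) (b : ℕ) : ℚ)
      = Polynomial.eval ((c a : ℚ)) (descPochhammer ℚ (b : ℕ)) := by
    intro a b
    rw [descPochhammer_eval_eq_descFactorial ℚ (c a) (b : ℕ)]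
    rw [Nat.descFactorial_eq_factorial_mul_choose]
    push_cast; ring
  have h3 : Matrix.det (Matrix.of fun a b : Fin n =>
      (Nat.factorial (b : ℕ) : ℚ) * (Nat.choose (c a) (b : ℕ) : ℚ))
      = (Matrix.vandermonde (fun a => (c a : ℚ))).det := by
    simp only [h2]
    exact (Matrix.det_eval_matrixOfPolynomials_eq_det_vandermonde _ _
      (fun i => descPochhammer_natDegree ℚ i) (fun i => monic_descPochhammer ℚ i)).symm
  rw [mul_comm, ← h1, h3, Matrix.det_vandermonde]







lemma det_choose_reduce (n : ℕ) (c : Fin (n + 1) → ℕ) :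
    Matrix.det (Matrix.of fun a b : Fin (n + 1) => (Nat.choose (c a) (b : ℕ) : ℚ))
      = (-1 : ℚ) ^ n * Matrix.det (Matrix.of fun a b : Fin n =>
          (Nat.choose (c a.castSucc) ((b : ℕ) + 1) : ℚ)
            - (Nat.choose (c a.succ) ((b : ℕ) + 1) : ℚ)) := by
  classical
  set A : Matrix (Fin (n + 1)) (Fin (n + 1)) ℚ :=
    Matrix.of fun a b => (Nat.choose (c a) (b : ℕ) : ℚ) with hA
  set U : Matrix (Fin (n + 1)) (Fin (n + 1)) ℚ :=
    Matrix.of fun a k => if k = a then 1 else if (k : ℕ) = (a : ℕ) + 1 then -1 else 0 with hU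
  have hUtri : U.BlockTriangular id := by
    intro a k hk
    simp only [Function.id_def] at hk
    have hv : (k : ℕ) < (a : ℕ) := hk
    have h1 : k ≠ a := by intro h; subst h; omega
    have h2 : (k : ℕ) ≠ (a : ℕ) + 1 := by omega
    simp [hU, h1, h2]
  have hdetU : U.det = 1 := by
    rw [Matrix.det_of_upperTriangular hUtri]
    have : ∀ i : Fin (n + 1), U i i = 1 := by intro i; simp [hU]
    simp [this]
  have hcs : ∀ a : Fin n, (a.castSucc : Fin (n + 1)) ≠ a.succ := by
    intro a h
    have := congrArg Fin.val h
    simp [Fin.val_succ] at this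
  have hBlt : ∀ (a : Fin n) (b : Fin (n + 1)),
      (U * A) a.castSucc b = A a.castSucc b - A a.succ b := by
    intro a b
    rw [Matrix.mul_apply]
    have key : ∀ k : Fin (n + 1), U a.castSucc k * A k b
        = (if k = a.castSucc then A k b else 0) + (if k = a.succ then -(A k b) else 0) := by
      intro k
      by_cases h1 : k = a.castSucc
      · simp [hU, h1, hcs a]
      · by_cases h2 : k = a.succ
        · have hval : (k : ℕ) = (a : ℕ) + 1 := by rw [h2]; simp [Fin.val_succ]
          simp [hU, h1, h2, hval, (hcs a).symm]
        · have hval : (k : ℕ) ≠ (a : ℕ) + 1 := by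
            intro h
            exact h2 (Fin.ext (by simp [Fin.val_succ, h]))
          simp [hU, h1, h2, hval]
    rw [Finset.sum_congr rfl (fun k _ => key k), Finset.sum_add_distrib,
      Finset.sum_ite_eq' Finset.univ, Finset.sum_ite_eq' Finset.univ]
    simp [sub_eq_add_neg]
  have hBlast : ∀ b, (U * A) (Fin.last n) b = A (Fin.last n) b := by
    intro b
    rw [Matrix.mul_apply]
    have key : ∀ k : Fin (n + 1), U (Fin.last n) k * A k b
        = if k = Fin.last n then A k b else 0 := by
      intro k
      by_cases h1 : k = Fin.last n
      · simp [hU, h1]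
      · have h2 : (k : ℕ) ≠ n + 1 := by
          have := k.isLt
          omega
        simp [hU, h1, h2]
    rw [Finset.sum_congr rfl (fun k _ => key k), Finset.sum_ite_eq' Finset.univ]
    simp
  have hcol0 : ∀ k : Fin (n + 1), A k 0 = 1 := by
    intro k
    simp [hA]
  have hdetA : A.det = (U * A).det := by
    rw [Matrix.det_mul, hdetU, one_mul]
  have hsub : (U * A).submatrix (Fin.last n).succAbove Fin.succ
      = Matrix.of (fun a b : Fin n =>
          (Nat.choose (c a.castSucc) ((b : ℕ) + 1) : ℚ)
            - (Nat.choose (c a.succ) ((b : ℕ) + 1) : ℚ)) := by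
    ext a b
    rw [Matrix.submatrix_apply, Fin.succAbove_last_apply, hBlt a b.succ]
    simp [hA, Fin.val_succ]
  rw [hdetA, Matrix.det_succ_column_zero]
  rw [Finset.sum_eq_single (Fin.last n)]
  · rw [hBlast, hcol0, hsub]
    simp only [Fin.val_last]
    ring
  · intro i _ hne
    rcases Fin.exists_castSucc_eq.mpr hne with ⟨j, rfl⟩
    rw [hBlt, hcol0, hcol0]
    ring
  · intro h
    exact absurd (Finset.mem_univ _) h







lemma sum_piFinset_snoc {M : Type*} [AddCommMonoid M] {n : ℕ} (t : Fin (n + 1) → Finset ℕ)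
    (F : (Fin (n + 1) → ℕ) → M) :
    ∑ p ∈ Fintype.piFinset t, F p
      = ∑ q ∈ Fintype.piFinset (fun a : Fin n => t a.castSucc),
          ∑ y ∈ t (Fin.last n), F (Fin.snoc q y) := by
  rw [← Finset.sum_product']
  apply Finset.sum_nbij' (i := fun p => (fun a : Fin n => p a.castSucc, p (Fin.last n)))
    (j := fun qy => Fin.snoc qy.1 qy.2)
  · intro p hp
    rw [Fintype.mem_piFinset] at hp
    rw [Finset.mem_product]
    exact ⟨by rw [Fintype.mem_piFinset]; intro a; exact hp _, hp _⟩
  · intro qy hqy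
    rw [Finset.mem_product] at hqy
    have h1 := Fintype.mem_piFinset.mp hqy.1
    rw [Fintype.mem_piFinset]
    intro a
    rcases eq_or_ne a (Fin.last n) with h | h
    · subst h; rw [Fin.snoc_last]; exact hqy.2
    · rcases Fin.exists_castSucc_eq.mpr h with ⟨b, rfl⟩
      rw [Fin.snoc_castSucc]
      exact h1 b
  · intro p _
    exact Fin.snoc_init_self p
  · intro qy _
    ext a
    · simp [Fin.snoc_castSucc]
    · simp [Fin.snoc_last]
  · intro p _
    exact congrArg F (Fin.snoc_init_self p).symm

lemma ext_mono {n : ℕ} {f : ℕ → ℕ} (p : Fin n → ℕ)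
    (hp : ∀ a : Fin n, f ((a : ℕ) + 1) ≤ p a ∧ p a ≤ f (a : ℕ))
    (hf : ∀ ⦃x y : ℕ⦄, x ≤ y → f y ≤ f x) :
    ∀ ⦃x y : ℕ⦄, x ≤ y → ext p y ≤ ext p x := by
  have step : ∀ x, ext p (x + 1) ≤ ext p x := by
    intro x
    unfold ext
    by_cases h1 : x + 1 < n
    · have h0 : x < n := by omega
      rw [dif_pos h1, dif_pos h0]
      calc p ⟨x + 1, h1⟩ ≤ f (x + 1) := (hp ⟨x + 1, h1⟩).2
        _ ≤ p ⟨x, h0⟩ := (hp ⟨x, h0⟩).1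
    · rw [dif_neg h1]
      omega
  intro x y hxy
  induction y with
  | zero => have : x = 0 := by omega
            subst this; exact le_rfl
  | succ y ih =>
      rcases Nat.eq_or_lt_of_le hxy with h | h
      · subst h; exact le_rfl
      · exact le_trans (step y) (ih (by omega))

def csgn (n : ℕ) : ℚ := (-1 : ℚ) ^ (n.choose 2)

lemma ext_snoc_zero {n : ℕ} (q : Fin n → ℕ) : ext (Fin.snoc q 0) = ext q := by
  funext a
  unfold ext
  by_cases h : a < n
  · rw [dif_pos (show a < n + 1 by omega), dif_pos h]
    have h2 : (⟨a, show a < n + 1 by omega⟩ : Fin (n + 1)) = (⟨a, h⟩ : Fin n).castSucc := rfl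
    rw [h2, Fin.snoc_castSucc]
  · rw [dif_neg h]
    by_cases h2 : a < n + 1
    · rw [dif_pos h2]
      have h3 : (⟨a, h2⟩ : Fin (n + 1)) = Fin.last n := by
        apply Fin.ext
        simp only [Fin.val_last]
        omega
      rw [h3, Fin.snoc_last]
    · rw [dif_neg h2]

lemma ext_apply_fin {n : ℕ} (q : Fin n → ℕ) (a : Fin n) : ext q (a : ℕ) = q a := by
  unfold ext
  rw [dif_pos a.isLt]

theorem cnt_formula : ∀ (N : ℕ) (f : ℕ → ℕ),
    (∀ ⦃x y : ℕ⦄, x ≤ y → f y ≤ f x) → (∀ a, N ≤ a → f a = 0) →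
    ((SSYTset N f).ncard : ℚ)
      = csgn N * Matrix.det (Matrix.of fun a b : Fin N =>
          (Nat.choose (f (a : ℕ) + (N - 1 - (a : ℕ))) (b : ℕ) : ℚ)) := by
  intro N
  induction N with
  | zero =>
      intro f hdec hvan
      rw [SSYT_zero 0 (fun a => hvan a (Nat.zero_le a))]
      simp [csgn, Matrix.det_fin_zero]
  | succ N IH =>
      intro f hdec hvan
      simp only [Nat.add_sub_cancel]
      set c : Fin (N + 1) → ℕ := fun a => f (a : ℕ) + (N - (a : ℕ)) with hc
      rw [branch N f hdec hvan]
      push_cast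
      rw [sum_piFinset_snoc]
      have hqfact : ∀ q ∈ Fintype.piFinset (fun a : Fin N =>
          Finset.Icc (f (((a.castSucc : Fin (N + 1)) : ℕ) + 1)) (f ((a.castSucc : Fin (N + 1)) : ℕ))),
          ∀ a : Fin N, f ((a : ℕ) + 1) ≤ q a ∧ q a ≤ f (a : ℕ) := by
        intro q hq a
        have := Fintype.mem_piFinset.mp hq a
        simpa [Finset.mem_Icc] using this
      have hterm : ∀ q ∈ Fintype.piFinset (fun a : Fin N =>
          Finset.Icc (f (((a.castSucc : Fin (N + 1)) : ℕ) + 1)) (f ((a.castSucc : Fin (N + 1)) : ℕ))),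
          (∑ y ∈ Finset.Icc (f (((Fin.last N : Fin (N+1)) : ℕ) + 1)) (f ((Fin.last N : Fin (N+1)) : ℕ)),
            ((SSYTset N (ext (Fin.snoc q y))).ncard : ℚ))
          = csgn N * Matrix.det (Matrix.of fun a b : Fin N =>
              (Nat.choose (q a + (N - 1 - (a : ℕ))) (b : ℕ) : ℚ)) := by
        intro q hq
        have hsingle : ∀ y ∈ Finset.Icc (f (((Fin.last N : Fin (N+1)) : ℕ) + 1)) (f ((Fin.last N : Fin (N+1)) : ℕ)),
            y ≠ 0 → ((SSYTset N (ext (Fin.snoc q y))).ncard : ℚ) = 0 := by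
          intro y hy hy0
          rw [Finset.mem_Icc] at hy
          have hp : ∀ a : Fin (N + 1), f ((a : ℕ) + 1) ≤ (Fin.snoc q y : Fin (N+1) → ℕ) a ∧ (Fin.snoc q y : Fin (N+1) → ℕ) a ≤ f (a : ℕ) := by
            intro a
            induction a using Fin.lastCases with
            | last =>
                rw [Fin.snoc_last]
                exact hy
            | cast i =>
                rw [Fin.snoc_castSucc]
                exact hqfact q hq i
          have hdec' := ext_mono _ hp hdec
          have h1 : 1 ≤ ext (Fin.snoc q y) N := by
            unfold ext
            rw [dif_pos (show N < N + 1 by omega)]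
            have h2 : (⟨N, show N < N + 1 by omega⟩ : Fin (N + 1)) = Fin.last N := rfl
            rw [h2, Fin.snoc_last]
            omega
          rw [SSYT_empty hdec' h1]
          simp
        have hmem0 : (0 : ℕ) ∈ Finset.Icc (f (((Fin.last N : Fin (N+1)) : ℕ) + 1)) (f ((Fin.last N : Fin (N+1)) : ℕ)) := by
          rw [Finset.mem_Icc]
          constructor
          · have : f (((Fin.last N : Fin (N+1)) : ℕ) + 1) = 0 := by
              apply hvan
              simp [Fin.val_last]
            omega
          · omega
        rw [Finset.sum_eq_single_of_mem 0 hmem0 hsingle, ext_snoc_zero]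
        have hdec'' := ext_mono q (hqfact q hq) hdec
        have hvan'' : ∀ a, N ≤ a → ext q a = 0 := by
          intro a ha
          unfold ext
          rw [dif_neg (by omega)]
        rw [IH (ext q) hdec'' hvan'']
        congr 1
        congr 1
        ext a b
        simp only [Matrix.of_apply]
        rw [ext_apply_fin]
      rw [Finset.sum_congr rfl hterm, ← Finset.mul_sum]
      have hset : Fintype.piFinset (fun a : Fin N =>
            Finset.Icc (f (((a.castSucc : Fin (N + 1)) : ℕ) + 1)) (f ((a.castSucc : Fin (N + 1)) : ℕ)))
          = Fintype.piFinset (fun a : Fin N => Finset.Icc (f ((a : ℕ) + 1)) (f (a : ℕ))) := by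
        simp [Fin.coe_castSucc]
      rw [hset,
        det_sum_pi (fun a : Fin N => Finset.Icc (f ((a : ℕ) + 1)) (f (a : ℕ)))
          (fun a y b => (Nat.choose (y + (N - 1 - (a : ℕ))) (b : ℕ) : ℚ))]
      have hentry : ∀ (a b : Fin N),
          (∑ y ∈ Finset.Icc (f ((a : ℕ) + 1)) (f (a : ℕ)), (Nat.choose (y + (N - 1 - (a : ℕ))) (b : ℕ) : ℚ))
            = (Nat.choose (c a.castSucc) ((b : ℕ) + 1) : ℚ) - (Nat.choose (c a.succ) ((b : ℕ) + 1) : ℚ) := by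
        intro a b
        have hmap : ∑ y ∈ Finset.Icc (f ((a : ℕ) + 1)) (f (a : ℕ)), (Nat.choose (y + (N - 1 - (a : ℕ))) (b : ℕ) : ℚ)
            = ∑ t ∈ Finset.Icc (f ((a : ℕ) + 1) + (N - 1 - (a : ℕ))) (f (a : ℕ) + (N - 1 - (a : ℕ))),
                (Nat.choose t (b : ℕ) : ℚ) := by
          rw [← Finset.map_add_right_Icc, Finset.sum_map]
          rfl
        rw [hmap]
        have ha : (a : ℕ) < N := a.isLt
        have hIco : Finset.Icc (f ((a : ℕ) + 1) + (N - 1 - (a : ℕ))) (f (a : ℕ) + (N - 1 - (a : ℕ)))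
            = Finset.Ico (c a.succ) (c a.castSucc) := by
          have h1 : c a.succ = f ((a : ℕ) + 1) + (N - 1 - (a : ℕ)) := by
            simp only [hc, Fin.val_succ, Nat.succ_eq_add_one]
            omega
          have h2 : c a.castSucc = f (a : ℕ) + (N - 1 - (a : ℕ)) + 1 := by
            simp only [hc, Fin.coe_castSucc]
            omega
          rw [h1, h2, Finset.Ico_add_one_right_eq_Icc]
        rw [hIco, sum_Ico_choose_q _ _ _ ?hle]
        case hle =>
          have hmono : f ((a : ℕ) + 1) ≤ f (a : ℕ) := hdec (by omega)
          simp only [hc, Fin.val_succ, Fin.coe_castSucc, Nat.succ_eq_add_one]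
          omega
      have hmx : (Matrix.of fun a b : Fin N =>
            ∑ y ∈ Finset.Icc (f ((a : ℕ) + 1)) (f (a : ℕ)), (Nat.choose (y + (N - 1 - (a : ℕ))) (b : ℕ) : ℚ))
          = Matrix.of (fun a b : Fin N =>
            (Nat.choose (c a.castSucc) ((b : ℕ) + 1) : ℚ) - (Nat.choose (c a.succ) ((b : ℕ) + 1) : ℚ)) := by
        ext a b
        exact hentry a b
      rw [hmx]
      have hred := det_choose_reduce N c
      have hsq : ((-1 : ℚ)) ^ N * ((-1 : ℚ)) ^ N = 1 := by
        rw [← pow_add]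
        exact Even.neg_one_pow ⟨N, by ring⟩
      have hcs : csgn (N + 1) = csgn N * (-1 : ℚ) ^ N := by
        unfold csgn
        rw [Nat.choose_succ_succ N 1, Nat.choose_one_right, pow_add]
        ring
      calc csgn N * Matrix.det (Matrix.of (fun a b : Fin N =>
            (Nat.choose (c a.castSucc) ((b : ℕ) + 1) : ℚ) - (Nat.choose (c a.succ) ((b : ℕ) + 1) : ℚ)))
          = (csgn N * ((-1 : ℚ) ^ N * (-1 : ℚ) ^ N)) * Matrix.det (Matrix.of (fun a b : Fin N =>
            (Nat.choose (c a.castSucc) ((b : ℕ) + 1) : ℚ) - (Nat.choose (c a.succ) ((b : ℕ) + 1) : ℚ))) := by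
            rw [hsq]; ring
        _ = csgn (N + 1) * Matrix.det (Matrix.of fun a b : Fin (N + 1) => (Nat.choose (c a) (b : ℕ) : ℚ)) := by
            rw [hcs, hred]; ring



lemma prod_Ioi_eq_pairs {β : Type*} [CommMonoid β] {N : ℕ} (h : Fin N → Fin N → β) :
    ∏ a : Fin N, ∏ b ∈ Finset.Ioi a, h a b
      = ∏ p ∈ Finset.univ.filter (fun p : Fin N × Fin N => p.1 < p.2), h p.1 p.2 := by
  rw [show (∏ a : Fin N, ∏ b ∈ Finset.Ioi a, h a b)
      = ∏ x ∈ (Finset.univ : Finset (Fin N)).sigma (fun a => Finset.Ioi a), h x.1 x.2 from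
    (Finset.prod_sigma Finset.univ (fun a => Finset.Ioi a)
      (fun x : (_ : Fin N) × Fin N => h x.1 x.2)).symm]
  apply Finset.prod_nbij' (i := fun x : (_ : Fin N) × Fin N => (x.1, x.2))
    (j := fun p : Fin N × Fin N => ⟨p.1, p.2⟩)
  · intro x hx
    simp only [Finset.mem_sigma, Finset.mem_Ioi] at hx
    simp [hx.2]
  · intro p hp
    simp only [Finset.mem_filter] at hp
    simp [Finset.mem_Ioi, hp.2]
  · intro x _; rfl
  · intro p _; rfl
  · intro x _; rfl

def gq (N : ℕ) (f : ℕ → ℕ) (a : Fin N) : ℚ := ((f (a : ℕ) + (N - 1 - (a : ℕ)) : ℕ) : ℚ)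

def pairs (N : ℕ) : Finset (Fin N × Fin N) := Finset.univ.filter (fun p => p.1 < p.2)

def Vq (N : ℕ) (f : ℕ → ℕ) : ℚ := ∏ p ∈ pairs N, (gq N f p.2 - gq N f p.1)

lemma cnt_mul_eq (N : ℕ) (f : ℕ → ℕ) (hd : ∀ ⦃x y : ℕ⦄, x ≤ y → f y ≤ f x)
    (hv : ∀ a, N ≤ a → f a = 0) :
    ((SSYTset N f).ncard : ℚ) * (∏ b : Fin N, (Nat.factorial (b : ℕ) : ℚ))
      = csgn N * Vq N f := by
  rw [cnt_formula N f hd hv, mul_assoc, det_choose_eval (fun a : Fin N => f (a : ℕ) + (N - 1 - (a : ℕ)))]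
  rw [Vq, pairs, ← prod_Ioi_eq_pairs (fun a b => gq N f b - gq N f a)]
  rfl

lemma gq_lt (N : ℕ) (f : ℕ → ℕ) (hd : ∀ ⦃x y : ℕ⦄, x ≤ y → f y ≤ f x)
    {p : Fin N × Fin N} (hp : p.1 < p.2) : gq N f p.2 < gq N f p.1 := by
  unfold gq
  rw [Nat.cast_lt]
  have h1 : f (p.2 : ℕ) ≤ f (p.1 : ℕ) := hd (le_of_lt hp)
  have h2 : (p.1 : ℕ) < (p.2 : ℕ) := hp
  have h3 := p.2.isLt
  omega

lemma gq_congr {N : ℕ} {f g : ℕ → ℕ} (a : Fin N) (h : f (a : ℕ) = g (a : ℕ)) :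
    gq N f a = gq N g a := by unfold gq; rw [h]

lemma gq_sub {N : ℕ} {f g : ℕ → ℕ} (a : Fin N) (h : f (a : ℕ) = g (a : ℕ) + 1) :
    gq N f a = gq N g a + 1 := by
  unfold gq
  rw [h]
  push_cast
  ring

end SchurAux

open SchurAux

set_option maxHeartbeats 1600000 in
theorem schur_ones_monotonicity_r_gt_hi (n N i hi r : ℕ)
    (lam hatlam mu hatmu : ℕ → ℕ)
    (hlam : isPartition lam) (hhatlam : isPartition hatlam)
    (hmu : isPartition mu) (hhatmu : isPartition hatmu)
    (hslam : psize lam = n) (hshatlam : psize hatlam = n)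
    (hsmu : psize mu = n - 1) (hshatmu : psize hatmu = n - 1)
    (hmove : moveBox lam hatlam i hi) (hmovemu : moveBox mu hatmu i hi)
    (hihi : i < hi)
    (hadd : lam = Function.update mu r (mu r + 1))
    (haddhat : hatlam = Function.update hatmu r (hatmu r + 1))
    (hr : hi < r)
    (hN : ∀ a, N ≤ a → hatlam a = 0) :
    schurOnes N lam * schurOnes N hatmu ≤ schurOnes N hatlam * schurOnes N mu := by
  classical
  obtain ⟨hm1, hm2, hm3⟩ := hmove
  obtain ⟨hn1, hn2, hn3⟩ := hmovemu
  have hlr : ∀ a, a ≠ r → lam a = mu a := by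
    intro a ha
    rw [hadd, Function.update_of_ne ha]
  have hlrr : lam r = mu r + 1 := by rw [hadd, Function.update_self]
  have hhlr : ∀ a, a ≠ r → hatlam a = hatmu a := by
    intro a ha
    rw [haddhat, Function.update_of_ne ha]
  have hhlrr : hatlam r = hatmu r + 1 := by rw [haddhat, Function.update_self]
  have hiN : i < N := by
    by_contra h
    have h1 := hN i (by omega)
    have h2 : hatlam hi ≤ hatlam i := hhatlam.1 (le_of_lt hihi)
    omega
  have hhiN : hi < N := by
    by_contra h
    have h1 := hN hi (by omega)
    omega
  have hrN : r < N := by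
    by_contra h
    have h1 := hN r (by omega)
    have h2 : lam r = hatlam r := hm3 r (by omega) (by omega)
    omega
  have hlamvan : ∀ a, N ≤ a → lam a = 0 := by
    intro a ha
    rw [hm3 a (by omega) (by omega)]
    exact hN a ha
  have hmuvan : ∀ a, N ≤ a → mu a = 0 := by
    intro a ha
    rw [← hlr a (by omega)]
    exact hlamvan a ha
  have hhatmuvan : ∀ a, N ≤ a → hatmu a = 0 := by
    intro a ha
    rw [← hhlr a (by omega)]
    exact hN a ha
  set I : Fin N := ⟨i, hiN⟩ with hI
  set H : Fin N := ⟨hi, hhiN⟩ with hH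
  set R : Fin N := ⟨r, hrN⟩ with hR
  -- value facts
  have a1 : gq N lam I = gq N hatlam I + 1 := gq_sub I hm1
  have a2 : gq N hatlam H = gq N lam H + 1 := gq_sub H hm2
  have a3 : gq N mu I = gq N lam I := gq_congr I (hlr i (by omega)).symm
  have a4 : gq N mu H = gq N lam H := gq_congr H (hlr hi (by omega)).symm
  have a5 : gq N lam R = gq N mu R + 1 := gq_sub R hlrr
  have a6 : gq N hatmu I = gq N hatlam I := gq_congr I (hhlr i (by omega)).symm
  have a7 : gq N hatmu H = gq N hatlam H := gq_congr H (hhlr hi (by omega)).symm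
  have a9 : gq N hatlam R = gq N lam R := gq_congr R (hm3 r (by omega) (by omega)).symm
  have a8 : gq N hatmu R = gq N mu R := by
    apply gq_congr
    show hatmu r = mu r
    have h2 : lam r = hatlam r := hm3 r (by omega) (by omega)
    omega
  have generic : ∀ a : Fin N, a ≠ I → a ≠ H → a ≠ R →
      gq N hatlam a = gq N lam a ∧ gq N mu a = gq N lam a ∧ gq N hatmu a = gq N lam a := by
    intro a h1 h2 h3
    have n1 : (a : ℕ) ≠ i := fun h => h1 (Fin.ext h)
    have n2 : (a : ℕ) ≠ hi := fun h => h2 (Fin.ext h)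
    have n3 : (a : ℕ) ≠ r := fun h => h3 (Fin.ext h)
    refine ⟨gq_congr a (hm3 _ n1 n2).symm, gq_congr a (hlr _ n3).symm, ?_⟩
    have := hhlr (a : ℕ) n3
    have := hm3 (a : ℕ) n1 n2
    apply gq_congr
    omega
  -- membership of the two special pairs
  have hIR : ((I, R) : Fin N × Fin N) ∈ pairs N := by
    rw [pairs, Finset.mem_filter]
    exact ⟨Finset.mem_univ _, Fin.mk_lt_mk.mpr (by omega)⟩
  have hHR : ((H, R) : Fin N × Fin N) ∈ pairs N := by
    rw [pairs, Finset.mem_filter]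
    exact ⟨Finset.mem_univ _, Fin.mk_lt_mk.mpr (by omega)⟩
  have hPQ : ((I, R) : Fin N × Fin N) ≠ (H, R) := by
    intro h
    have h2 : i = hi := by
      have := congrArg (fun p : Fin N × Fin N => (p.1 : ℕ)) h
      simpa using this
    omega
  have hsub : ({((I, R) : Fin N × Fin N), (H, R)} : Finset (Fin N × Fin N)) ⊆ pairs N := by
    intro p hp
    rcases Finset.mem_insert.mp hp with h | h
    · subst h; exact hIR
    · rw [Finset.mem_singleton] at h; subst h; exact hHR
  have hsplit : ∀ f : ℕ → ℕ, Vq N f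
      = (∏ p ∈ pairs N \ {((I, R) : Fin N × Fin N), (H, R)}, (gq N f p.2 - gq N f p.1))
        * ((gq N f R - gq N f I) * (gq N f R - gq N f H)) := by
    intro f
    rw [Vq, ← Finset.prod_sdiff hsub, Finset.prod_insert (by
      rw [Finset.mem_singleton]; exact hPQ), Finset.prod_singleton]
  -- the common factor is equal on both sides
  have hC : (∏ p ∈ pairs N \ {((I, R) : Fin N × Fin N), (H, R)},
        (gq N lam p.2 - gq N lam p.1) * (gq N hatmu p.2 - gq N hatmu p.1))
      = ∏ p ∈ pairs N \ {((I, R) : Fin N × Fin N), (H, R)},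
        (gq N hatlam p.2 - gq N hatlam p.1) * (gq N mu p.2 - gq N mu p.1) := by
    apply Finset.prod_congr rfl
    intro p hp
    obtain ⟨hmem, hnot⟩ := Finset.mem_sdiff.mp hp
    have hlt : p.1 < p.2 := (Finset.mem_filter.mp hmem).2
    have hne1 : p ≠ (I, R) := by intro h; exact hnot (by rw [h]; simp)
    have hne2 : p ≠ (H, R) := by intro h; exact hnot (by rw [h]; simp)
    by_cases hcase : p.1 ≠ R ∧ p.2 ≠ R
    · have key : ∀ a : Fin N, a ≠ R → gq N mu a = gq N lam a ∧ gq N hatmu a = gq N hatlam a := by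
        intro a ha
        have h1 : (a : ℕ) ≠ r := fun h => ha (Fin.ext h)
        exact ⟨gq_congr a (hlr _ h1).symm, gq_congr a (hhlr _ h1).symm⟩
      obtain ⟨k1, k2⟩ := key p.1 hcase.1
      obtain ⟨k3, k4⟩ := key p.2 hcase.2
      rw [k1, k2, k3, k4]
      ring
    · have key2 : ∀ a : Fin N, a = R ∨ (a ≠ I ∧ a ≠ H ∧ a ≠ R) →
          gq N hatlam a = gq N lam a ∧ gq N hatmu a = gq N mu a := by
        intro a ha
        rcases ha with rfl | ⟨h1, h2, h3⟩
        · exact ⟨a9, a8⟩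
        · obtain ⟨g1, g2, g3⟩ := generic a h1 h2 h3
          exact ⟨g1, by rw [g3, g2]⟩
      push_neg at hcase
      have hor : p.1 = R ∨ p.2 = R := by
        by_cases h : p.1 = R
        · exact Or.inl h
        · exact Or.inr (hcase h)
      have harg1 : p.1 = R ∨ (p.1 ≠ I ∧ p.1 ≠ H ∧ p.1 ≠ R) := by
        rcases hor with h | h
        · exact Or.inl h
        · right
          refine ⟨?_, ?_, ?_⟩
          · intro hh; exact hne1 (Prod.ext hh h)
          · intro hh; exact hne2 (Prod.ext hh h)
          · intro hh; rw [hh, h] at hlt; exact lt_irrefl _ hlt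
      have harg2 : p.2 = R ∨ (p.2 ≠ I ∧ p.2 ≠ H ∧ p.2 ≠ R) := by
        rcases hor with h | h
        · right
          have hltv : (R : Fin N) < p.2 := by rw [← h]; exact hlt
          have hv : r < (p.2 : ℕ) := hltv
          refine ⟨?_, ?_, ?_⟩
          · intro hh; rw [hh] at hv; simp [hI] at hv; omega
          · intro hh; rw [hh] at hv; simp [hH] at hv; omega
          · intro hh; rw [hh] at hv; simp [hR] at hv
        · exact Or.inl h
      obtain ⟨m1, m2⟩ := key2 p.1 harg1
      obtain ⟨m3, m4⟩ := key2 p.2 harg2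
      rw [m1, m2, m3, m4]
  -- the key inequality on the two special pairs
  have hlam2 : lam hi + 2 ≤ lam i := by
    have h := hhatlam.1 (le_of_lt hihi)
    omega
  have o1 : gq N lam H + 3 ≤ gq N lam I := by
    have hnat : lam hi + (N - 1 - hi) + 3 ≤ lam i + (N - 1 - i) := by omega
    have := (Nat.cast_le (α := ℚ)).mpr hnat
    push_cast at this
    unfold gq
    push_cast
    convert this using 2 <;> simp [hI, hH]
  have o2 : gq N lam R + 1 ≤ gq N lam H := by
    have hlr2 : lam r ≤ lam hi := hlam.1 (le_of_lt hr)
    have hnat : lam r + (N - 1 - r) + 1 ≤ lam hi + (N - 1 - hi) := by omega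
    have := (Nat.cast_le (α := ℚ)).mpr hnat
    push_cast at this
    unfold gq
    push_cast
    convert this using 2 <;> simp [hH, hR]
  have hkey : ((gq N lam R - gq N lam I) * (gq N lam R - gq N lam H))
        * ((gq N hatmu R - gq N hatmu I) * (gq N hatmu R - gq N hatmu H))
      ≤ ((gq N hatlam R - gq N hatlam I) * (gq N hatlam R - gq N hatlam H))
        * ((gq N mu R - gq N mu I) * (gq N mu R - gq N mu H)) := by
    have b1 : gq N hatlam I = gq N lam I - 1 := by linarith
    have b2 : gq N hatlam H = gq N lam H + 1 := a2
    have b3 : gq N hatlam R = gq N lam R := a9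
    have b4 : gq N mu I = gq N lam I := a3
    have b5 : gq N mu H = gq N lam H := a4
    have b6 : gq N mu R = gq N lam R - 1 := by linarith
    have b7 : gq N hatmu I = gq N lam I - 1 := by rw [a6]; linarith
    have b8 : gq N hatmu H = gq N lam H + 1 := by rw [a7]; exact a2
    have b9 : gq N hatmu R = gq N lam R - 1 := by rw [a8]; linarith
    rw [b1, b2, b3, b4, b5, b6, b7, b8, b9]
    set u := gq N lam I
    set v := gq N lam H
    set w := gq N lam R
    have hA : v + 1 - w ≤ u - w := by linarith
    have hB : (0 : ℚ) ≤ v + 1 - w := by linarith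
    nlinarith [mul_self_le_mul_self hB hA]
  -- assemble the V inequality
  have main : Vq N lam * Vq N hatmu ≤ Vq N hatlam * Vq N mu := by
    rw [hsplit lam, hsplit hatmu, hsplit hatlam, hsplit mu]
    have hC' : (∏ p ∈ pairs N \ {((I, R) : Fin N × Fin N), (H, R)}, (gq N lam p.2 - gq N lam p.1))
          * (∏ p ∈ pairs N \ {((I, R) : Fin N × Fin N), (H, R)}, (gq N hatmu p.2 - gq N hatmu p.1))
        = (∏ p ∈ pairs N \ {((I, R) : Fin N × Fin N), (H, R)}, (gq N hatlam p.2 - gq N hatlam p.1))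
          * (∏ p ∈ pairs N \ {((I, R) : Fin N × Fin N), (H, R)}, (gq N mu p.2 - gq N mu p.1)) := by
      rw [← Finset.prod_mul_distrib, ← Finset.prod_mul_distrib]
      exact hC
    have hCpos : 0 ≤ (∏ p ∈ pairs N \ {((I, R) : Fin N × Fin N), (H, R)}, (gq N lam p.2 - gq N lam p.1))
        * (∏ p ∈ pairs N \ {((I, R) : Fin N × Fin N), (H, R)}, (gq N hatmu p.2 - gq N hatmu p.1)) := by
      rw [← Finset.prod_mul_distrib]
      apply Finset.prod_nonneg
      intro p hp
      obtain ⟨hmem, _⟩ := Finset.mem_sdiff.mp hp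
      have hlt : p.1 < p.2 := (Finset.mem_filter.mp hmem).2
      have t1 := gq_lt N lam hlam.1 hlt
      have t2 := gq_lt N hatmu hhatmu.1 hlt
      exact le_of_lt (mul_pos_of_neg_of_neg (by linarith) (by linarith))
    set PL := ∏ p ∈ pairs N \ {((I, R) : Fin N × Fin N), (H, R)}, (gq N lam p.2 - gq N lam p.1) with hd1
    set PM := ∏ p ∈ pairs N \ {((I, R) : Fin N × Fin N), (H, R)}, (gq N hatmu p.2 - gq N hatmu p.1) with hd2
    set PH := ∏ p ∈ pairs N \ {((I, R) : Fin N × Fin N), (H, R)}, (gq N hatlam p.2 - gq N hatlam p.1) with hd3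
    set PU := ∏ p ∈ pairs N \ {((I, R) : Fin N × Fin N), (H, R)}, (gq N mu p.2 - gq N mu p.1) with hd4
    set TL := (gq N lam R - gq N lam I) * (gq N lam R - gq N lam H) with hd5
    set TM := (gq N hatmu R - gq N hatmu I) * (gq N hatmu R - gq N hatmu H) with hd6
    set TH := (gq N hatlam R - gq N hatlam I) * (gq N hatlam R - gq N hatlam H) with hd7
    set TU := (gq N mu R - gq N mu I) * (gq N mu R - gq N mu H) with hd8
    calc PL * TL * (PM * TM) = (PL * PM) * (TL * TM) := by ring
      _ ≤ (PL * PM) * (TH * TU) := mul_le_mul_of_nonneg_left hkey hCpos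
      _ = (PH * PU) * (TH * TU) := by rw [hC']
      _ = PH * TH * (PU * TU) := by ring
  -- from counts to the goal
  have c1 := cnt_mul_eq N lam hlam.1 hlamvan
  have c2 := cnt_mul_eq N hatlam hhatlam.1 hN
  have c3 := cnt_mul_eq N mu hmu.1 hmuvan
  have c4 := cnt_mul_eq N hatmu hhatmu.1 hhatmuvan
  have hsgn : csgn N * csgn N = 1 := by
    unfold csgn
    rw [← pow_add]
    exact Even.neg_one_pow ⟨N.choose 2, by ring⟩
  have Kpos : 0 < (∏ b : Fin N, (Nat.factorial (b : ℕ) : ℚ)) :=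
    Finset.prod_pos (fun b _ => by exact_mod_cast Nat.factorial_pos _)
  have goalQ : ((SSYTset N lam).ncard : ℚ) * ((SSYTset N hatmu).ncard : ℚ)
      ≤ ((SSYTset N hatlam).ncard : ℚ) * ((SSYTset N mu).ncard : ℚ) := by
    apply le_of_mul_le_mul_right _ (mul_pos Kpos Kpos)
    calc ((SSYTset N lam).ncard : ℚ) * ((SSYTset N hatmu).ncard : ℚ)
            * ((∏ b : Fin N, (Nat.factorial (b : ℕ) : ℚ)) * (∏ b : Fin N, (Nat.factorial (b : ℕ) : ℚ)))
        = (((SSYTset N lam).ncard : ℚ) * (∏ b : Fin N, (Nat.factorial (b : ℕ) : ℚ)))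
            * (((SSYTset N hatmu).ncard : ℚ) * (∏ b : Fin N, (Nat.factorial (b : ℕ) : ℚ))) := by ring
      _ = (csgn N * Vq N lam) * (csgn N * Vq N hatmu) := by rw [c1, c4]
      _ = (csgn N * csgn N) * (Vq N lam * Vq N hatmu) := by ring
      _ = Vq N lam * Vq N hatmu := by rw [hsgn, one_mul]
      _ ≤ Vq N hatlam * Vq N mu := main
      _ = (csgn N * csgn N) * (Vq N hatlam * Vq N mu) := by rw [hsgn, one_mul]
      _ = (csgn N * Vq N hatlam) * (csgn N * Vq N mu) := by ring
      _ = (((SSYTset N hatlam).ncard : ℚ) * (∏ b : Fin N, (Nat.factorial (b : ℕ) : ℚ)))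
            * (((SSYTset N mu).ncard : ℚ) * (∏ b : Fin N, (Nat.factorial (b : ℕ) : ℚ))) := by
          rw [c2, c3]
      _ = ((SSYTset N hatlam).ncard : ℚ) * ((SSYTset N mu).ncard : ℚ)
            * ((∏ b : Fin N, (Nat.factorial (b : ℕ) : ℚ)) * (∏ b : Fin N, (Nat.factorial (b : ℕ) : ℚ))) := by
          ring
  have hfinal : schurOnes N lam = (SSYTset N lam).ncard := rfl
  have hfinal2 : schurOnes N hatmu = (SSYTset N hatmu).ncard := rfl
  have hfinal3 : schurOnes N hatlam = (SSYTset N hatlam).ncard := rfl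
  have hfinal4 : schurOnes N mu = (SSYTset N mu).ncard := rfl
  rw [hfinal, hfinal2, hfinal3, hfinal4]
  exact_mod_cast goalQ
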